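/- Let N ≥ 1 and let wA, wB ∈ ℂ^N be the per-polarization weights of a dual-polarized beam. Define the second beam w′A = −J_N·conj(wB), w′B = J_N·conj(wA). Then for every ψ ∈ ℝ the second beam has an identical total power pattern and is polarization-orthogonal to the first in every direction: (i) |w′Aᵀ a_N(ψ)|² + |w′Bᵀ a_N(ψ)|² = |wAᵀ a_N(ψ)|² + |wBᵀ a_N(ψ)|², and (ii) conj(wAᵀ a_N(ψ))·(w′Aᵀ a_N(ψ)) + conj(wBᵀ a_N(ψ))·(w′Bᵀ a_N(ψ)) = 0. -/

import Mathlib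

open Finset

/-- Steering vector of an `N`-element uniform linear array at electrical angle `ψ`:
`(a_N(ψ))_n = exp(i n ψ)`. -/
noncomputable def steer (N : ℕ) (ψ : ℝ) : Fin N → ℂ :=
  fun n => Complex.exp (Complex.I * ((n : ℕ) : ℂ) * (ψ : ℂ))

/-- Bilinear dot product `wᵀ a = ∑ n, w n * a n`. -/
noncomputable def dotp {N : ℕ} (w a : Fin N → ℂ) : ℂ := ∑ n, w n * a n

lemma key_rev (N : ℕ) (hN : 1 ≤ N) (ψ : ℝ) (w : Fin N → ℂ) :
    dotp (fun n => (starRingEnd ℂ) (w n.rev)) (steer N ψ)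
      = Complex.exp (Complex.I * ((N : ℂ) - 1) * ψ)
        * (starRingEnd ℂ) (dotp w (steer N ψ)) := by
  simp only [dotp, steer, map_sum, Finset.mul_sum]
  refine Fintype.sum_bijective Fin.rev Fin.rev_bijective _ _ ?_
  intro x
  have hx : ((x.rev : ℕ) : ℂ) = (N : ℂ) - 1 - (x : ℕ) := by
    have h1 : (x : ℕ) ≤ N - 1 := Nat.le_sub_one_of_lt x.isLt
    rw [Fin.val_rev, Nat.cast_sub (by omega : (x:ℕ)+1 ≤ N)]
    push_cast
    ring
  simp only [Fin.rev_rev, map_mul, ← Complex.exp_conj, Complex.conj_I,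
    Complex.conj_natCast, Complex.conj_ofReal]
  rw [hx, mul_left_comm, ← Complex.exp_add]
  congr 2
  ring

lemma abs_c (N : ℕ) (ψ : ℝ) :
    ‖Complex.exp (Complex.I * ((N : ℂ) - 1) * ψ)‖ = 1 := by
  rw [Complex.norm_exp]
  simp [Complex.mul_re, Complex.mul_im]

theorem second_beam_same_power_and_orthogonal_polarization
    (N : ℕ) (hN : 1 ≤ N) (wA wB : Fin N → ℂ)
    (w'A w'B : Fin N → ℂ)
    (h'A : w'A = fun n => -(starRingEnd ℂ) (wB n.rev))
    (h'B : w'B = fun n => (starRingEnd ℂ) (wA n.rev))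
    (ψ : ℝ) :
    (‖dotp w'A (steer N ψ)‖ ^ 2 + ‖dotp w'B (steer N ψ)‖ ^ 2
        = ‖dotp wA (steer N ψ)‖ ^ 2 + ‖dotp wB (steer N ψ)‖ ^ 2)
    ∧ (starRingEnd ℂ) (dotp wA (steer N ψ)) * dotp w'A (steer N ψ)
        + (starRingEnd ℂ) (dotp wB (steer N ψ)) * dotp w'B (steer N ψ) = 0 := by
  set a := steer N ψ
  set c := Complex.exp (Complex.I * ((N : ℂ) - 1) * ψ) with hc
  have hA' : dotp w'A a = -(c * (starRingEnd ℂ) (dotp wB a)) := by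
    have : dotp w'A a = -dotp (fun n => (starRingEnd ℂ) (wB n.rev)) a := by
      simp [h'A, dotp, ← Finset.sum_neg_distrib]
    rw [this, key_rev N hN ψ wB]
  have hB' : dotp w'B a = c * (starRingEnd ℂ) (dotp wA a) := by
    rw [h'B, key_rev N hN ψ wA]
  constructor
  · rw [hA', hB']
    have hc1 : ‖c‖ = 1 := abs_c N ψ
    simp [map_mul, hc1]
    ring
  · rw [hA', hB']
    ring
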